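/- Let d ≥ 1 and n ≥ 1 be integers and let P, Q be d×d real matrices. Let Σ be the (nd)×(nd) block matrix whose n diagonal d×d blocks all equal P and whose off-diagonal d×d blocks all equal Q (i.e. Σ = I_n ⊗ P + (J_n − I_n) ⊗ Q, where J_n is the all-ones n×n matrix). Then det Σ = det(P − Q)^{n−1} · det(P + (n−1)·Q). -/
import Mathlib

open Kronecker Matrix

/-- Determinant of a replica-symmetric block matrix: if Σ has n diagonal d×d
blocks equal to P and all off-diagonal blocks equal to Q, then
det Σ = det(P − Q)^{n−1} · det(P + (n−1)Q). -/
theorem replica_symmetric_block_det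
    (d n : ℕ) (hd : 1 ≤ d) (hn : 1 ≤ n)
    (P Q : Matrix (Fin d) (Fin d) ℝ)
    (Sig : Matrix (Fin n × Fin d) (Fin n × Fin d) ℝ)
    (hSig : ∀ (a b : Fin n) (i j : Fin d),
      Sig (a, i) (b, j) = if a = b then P i j else Q i j) :
    Sig.det = (P - Q).det ^ (n - 1) * (P + ((n : ℝ) - 1) • Q).det := by
  haveI : NeZero n := ⟨by omega⟩
  have hn0 : (n : ℝ) ≠ 0 := Nat.cast_ne_zero.mpr (by omega)
  set S : Matrix (Fin n) (Fin n) ℝ := Matrix.of fun a b =>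
    if a = 0 then 1 else (if a = b then 1 else 0) - (if b = 0 then 1 else 0) with hS
  set S' : Matrix (Fin n) (Fin n) ℝ := Matrix.of fun a b =>
    if b = 0 then (n:ℝ)⁻¹ else (if a = b then 1 else 0) - (n:ℝ)⁻¹ with hS'
  set J : Matrix (Fin n) (Fin n) ℝ := Matrix.of fun _ _ => 1 with hJ
  set D : Matrix (Fin n) (Fin n) ℝ := Matrix.of fun a b =>
    if a = 0 ∧ b = 0 then (n:ℝ) else 0 with hD
  -- column sums of S'
  have hcol : ∀ c : Fin n, ∑ b, S' b c = if c = 0 then 1 else 0 := by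
    intro c
    by_cases hc : c = 0
    · subst hc
      simp [hS', Finset.sum_const, Finset.card_univ]
    · simp [hS', hc, Finset.sum_sub_distrib, Finset.sum_ite_eq, Finset.card_univ]
  have hSS' : S * S' = 1 := by
    ext a c
    rw [Matrix.mul_apply, Matrix.one_apply]
    by_cases ha : a = 0
    · subst ha
      have : ∀ b, S 0 b * S' b c = S' b c := by intro b; simp [hS]
      rw [Finset.sum_congr rfl fun b _ => this b, hcol]
      by_cases hc : c = 0 <;> simp [hc, eq_comm]
    · have : ∀ b, S a b * S' b c
          = (if a = b then 1 else 0) * S' b c - (if b = 0 then 1 else 0) * S' b c := by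
        intro b; simp [hS, ha, sub_mul]
      rw [Finset.sum_congr rfl fun b _ => this b, Finset.sum_sub_distrib]
      simp only [ite_mul, one_mul, zero_mul, Finset.sum_ite_eq, Finset.mem_univ, if_true]
      by_cases hc : c = 0
      · subst hc; simp [hS', ha]
      · simp [hS', hc, ha, Ne.symm ha, eq_comm]
  have hdetSS' : S.det * S'.det = 1 := by
    rw [← Matrix.det_mul, hSS', Matrix.det_one]
  have hSJ : S * J = Matrix.of fun a _ => if a = 0 then (n:ℝ) else 0 := by
    ext a b
    rw [Matrix.mul_apply]
    by_cases ha : a = 0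
    · simp [hS, hJ, ha, Finset.sum_const, Finset.card_univ]
    · simp [hS, hJ, ha, Finset.sum_sub_distrib, Finset.sum_ite_eq', Finset.sum_ite_eq]
  have hSJS' : S * J * S' = D := by
    rw [hSJ]
    ext a c
    rw [Matrix.mul_apply]
    by_cases ha : a = 0
    · simp only [Matrix.of_apply, ha, if_true, ← Finset.mul_sum]
      rw [hcol]
      by_cases hc : c = 0 <;> simp [hD, ha, hc]
    · simp [hD, ha]
  -- decompose Sig
  have hSigd : Sig = (1 : Matrix (Fin n) (Fin n) ℝ) ⊗ₖ (P - Q) + J ⊗ₖ Q := by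
    ext ⟨a, i⟩ ⟨b, j⟩
    rw [hSig]
    by_cases hab : a = b <;>
      simp [hab, Matrix.kroneckerMap_apply, Matrix.one_apply, hJ, Matrix.sub_apply]
  have hT : (S ⊗ₖ (1 : Matrix (Fin d) (Fin d) ℝ)) * Sig * (S' ⊗ₖ 1)
      = (1 : Matrix (Fin n) (Fin n) ℝ) ⊗ₖ (P - Q) + D ⊗ₖ Q := by
    rw [hSigd, Matrix.mul_add, Matrix.add_mul, ← Matrix.mul_kronecker_mul,
      ← Matrix.mul_kronecker_mul, ← Matrix.mul_kronecker_mul, ← Matrix.mul_kronecker_mul,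
      Matrix.mul_one, Matrix.mul_one, Matrix.one_mul, Matrix.mul_one, Matrix.one_mul, hSS', hSJS']
  have hdetT : Sig.det = ((1 : Matrix (Fin n) (Fin n) ℝ) ⊗ₖ (P - Q) + D ⊗ₖ Q).det := by
    rw [← hT, Matrix.det_mul, Matrix.det_mul, Matrix.det_kronecker, Matrix.det_kronecker]
    simp only [Matrix.det_one, one_pow, mul_one, Fintype.card_fin]
    rw [mul_right_comm, ← mul_pow, hdetSS', one_pow, one_mul]
  set B : Fin n → Matrix (Fin d) (Fin d) ℝ :=
    fun k => if k = 0 then P + ((n : ℝ) - 1) • Q else P - Q with hB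
  have hbd : (1 : Matrix (Fin n) (Fin n) ℝ) ⊗ₖ (P - Q) + D ⊗ₖ Q
      = (Matrix.blockDiagonal B).submatrix (Equiv.prodComm (Fin n) (Fin d))
        (Equiv.prodComm (Fin n) (Fin d)) := by
    ext ⟨a, i⟩ ⟨b, j⟩
    simp only [Matrix.add_apply, Matrix.kroneckerMap_apply, Matrix.one_apply, hD,
      Matrix.of_apply, Matrix.submatrix_apply, Equiv.prodComm_apply, Prod.swap_prod_mk,
      Matrix.blockDiagonal_apply, hB]
    by_cases hab : a = b
    · subst hab
      by_cases ha : a = 0 <;>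
        simp [ha, Matrix.add_apply, Matrix.sub_apply, Matrix.smul_apply] <;> ring
    · simp [hab, Ne.symm hab]
      intro h1 h2
      exact absurd (h1.trans h2.symm) hab
  rw [hdetT, hbd, Matrix.det_submatrix_equiv_self, Matrix.det_blockDiagonal]
  rw [← Finset.mul_prod_erase Finset.univ _ (Finset.mem_univ (0 : Fin n))]
  have : ∀ k ∈ Finset.univ.erase (0 : Fin n), (B k).det = (P - Q).det := by
    intro k hk
    simp [hB, Finset.ne_of_mem_erase hk]
  rw [Finset.prod_congr rfl this, Finset.prod_const, Finset.card_erase_of_mem (Finset.mem_univ _),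
    Finset.card_univ, Fintype.card_fin]
  simp [hB, mul_comm]
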